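/- For a vector p = (p_1, ..., p_n) ∈ [0,1]^n define R^n_i(p) = sqrt(Σ_{j=1}^n p_j(1 - p_j)) · P(S^n = i), where S^n is a sum of independent Bernoullis with parameters p_1, ..., p_n. Then for every p ∈ [0,1]^n and every i, R^n_i(p) ≤ sup { R^n_i(q) : q ∈ [0,1]^n and the set {q_j : 0 < q_j < 1} has at most 2 elements }. In other words, the supremum of R^n_i over [0,1]^n is attained (in the limit) by parameter vectors whose entries take at most two distinct values in the open interval (0,1). -/

import Mathlib

open Finset Function

/-- `P(Sⁿ = i)` for a sum of independent Bernoullis with parameters `p`. -/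
noncomputable def Pprob (n : ℕ) (i : ℕ) (p : Fin n → ℝ) : ℝ :=
  ∑ A ∈ Finset.univ.filter (fun A : Finset (Fin n) => A.card = i),
    (∏ j ∈ A, p j) * ∏ j ∈ Aᶜ, (1 - p j)

/-- `Rⁿᵢ(p) = σⁿ(p) · P(Sⁿ = i)`. -/
noncomputable def R (n : ℕ) (i : ℕ) (p : Fin n → ℝ) : ℝ :=
  Real.sqrt (∑ j, p j * (1 - p j)) * Pprob n i p

lemma pprob_continuous (n i : ℕ) : Continuous fun p : Fin n → ℝ => Pprob n i p := by
  unfold Pprob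
  apply continuous_finset_sum
  intro A _
  exact (continuous_finset_prod _ (fun j _ => continuous_apply j)).mul
    (continuous_finset_prod _ (fun j _ => continuous_const.sub (continuous_apply j)))

lemma pprob_comp_perm (n i : ℕ) (q : Fin n → ℝ) (π : Equiv.Perm (Fin n)) :
    Pprob n i (q ∘ π) = Pprob n i q := by
  classical
  unfold Pprob
  have himg : ∀ A : Finset (Fin n), (A.image ⇑π)ᶜ = Aᶜ.image ⇑π := by
    intro A; ext j
    simp only [Finset.mem_compl, Finset.mem_image]
    constructor
    · intro h; exact ⟨π.symm j, by
        intro hc; exact h ⟨π.symm j, hc, by simp⟩, by simp⟩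
    · rintro ⟨a, ha, rfl⟩ ⟨b, hb, hba⟩
      exact ha (by rwa [← π.injective hba])
  refine Finset.sum_nbij' (fun A => A.image ⇑π) (fun A => A.image ⇑π.symm) ?_ ?_ ?_ ?_ ?_
  · intro A hA
    simp only [Finset.mem_filter, Finset.mem_univ, true_and] at *
    rw [Finset.card_image_of_injective _ π.injective]; exact hA
  · intro A hA
    simp only [Finset.mem_filter, Finset.mem_univ, true_and] at *
    rw [Finset.card_image_of_injective _ π.symm.injective]; exact hA
  · intro A _; simp [Finset.image_image]
  · intro A _; simp [Finset.image_image]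
  · intro A _
    rw [himg, Finset.prod_image (fun a _ b _ h => π.injective h),
      Finset.prod_image (fun a _ b _ h => π.injective h)]
    rfl

lemma pprob_affine (n i : ℕ) (q : Fin n → ℝ) (u : Fin n) :
    ∃ a b : ℝ, ∀ x, Pprob n i (Function.update q u x) = a + b * x := by
  classical
  set T := Finset.univ.filter (fun A : Finset (Fin n) => A.card = i) with hT
  refine ⟨∑ A ∈ T.filter (fun A => u ∉ A), (∏ j ∈ A, q j) * ∏ j ∈ Aᶜ.erase u, (1 - q j),
     (∑ A ∈ T.filter (fun A => u ∈ A), (∏ j ∈ A.erase u, q j) * ∏ j ∈ Aᶜ, (1 - q j))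
     - ∑ A ∈ T.filter (fun A => u ∉ A), (∏ j ∈ A, q j) * ∏ j ∈ Aᶜ.erase u, (1 - q j),
     fun x => ?_⟩
  unfold Pprob
  rw [← hT, ← Finset.sum_filter_add_sum_filter_not T (fun A => u ∈ A)]
  have h1 : ∀ A ∈ T.filter (fun A => u ∈ A),
      (∏ j ∈ A, Function.update q u x j) * ∏ j ∈ Aᶜ, (1 - Function.update q u x j)
      = x * ((∏ j ∈ A.erase u, q j) * ∏ j ∈ Aᶜ, (1 - q j)) := by
    intro A hA
    have hu : u ∈ A := (Finset.mem_filter.1 hA).2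
    have huc : u ∉ Aᶜ := by simp [hu]
    have e1 : ∏ j ∈ Aᶜ, (1 - Function.update q u x j) = ∏ j ∈ Aᶜ, (1 - q j) :=
      Finset.prod_congr rfl (fun j hj => by
        have hne : j ≠ u := by rintro rfl; exact huc hj
        rw [Function.update_of_ne hne])
    have e2 : ∏ j ∈ A.erase u, Function.update q u x j = ∏ j ∈ A.erase u, q j :=
      Finset.prod_congr rfl (fun j hj => by
        rw [Function.update_of_ne (Finset.ne_of_mem_erase hj)])
    rw [← Finset.mul_prod_erase A _ hu, Function.update_self, e1, e2]
    ring
  have h2 : ∀ A ∈ T.filter (fun A => u ∉ A),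
      (∏ j ∈ A, Function.update q u x j) * ∏ j ∈ Aᶜ, (1 - Function.update q u x j)
      = (1 - x) * ((∏ j ∈ A, q j) * ∏ j ∈ Aᶜ.erase u, (1 - q j)) := by
    intro A hA
    have hu : u ∉ A := (Finset.mem_filter.1 hA).2
    have huc : u ∈ Aᶜ := by simp [hu]
    have e1 : ∏ j ∈ A, Function.update q u x j = ∏ j ∈ A, q j :=
      Finset.prod_congr rfl (fun j hj => by
        have hne : j ≠ u := by rintro rfl; exact hu hj
        rw [Function.update_of_ne hne])
    have e2 : ∏ j ∈ Aᶜ.erase u, (1 - Function.update q u x j) = ∏ j ∈ Aᶜ.erase u, (1 - q j) :=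
      Finset.prod_congr rfl (fun j hj => by
        rw [Function.update_of_ne (Finset.ne_of_mem_erase hj)])
    rw [← Finset.mul_prod_erase Aᶜ _ huc, Function.update_self, e1, e2]
    ring
  rw [Finset.sum_congr rfl h1, Finset.sum_congr rfl h2, ← Finset.mul_sum, ← Finset.mul_sum]
  ring

lemma affine_eval {f : ℝ → ℝ} (h : ∃ a b : ℝ, ∀ x, f x = a + b * x) :
    ∀ x, f x = f 0 + (f 1 - f 0) * x := by
  obtain ⟨a, b, hf⟩ := h
  intro x
  rw [hf, hf, hf]; ring

lemma affine_sym_rep (G : ℝ → ℝ → ℝ → ℝ)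
    (ha : ∀ y z, ∃ a b : ℝ, ∀ x, G x y z = a + b * x)
    (hb : ∀ x z, ∃ a b : ℝ, ∀ y, G x y z = a + b * y)
    (hc : ∀ x y, ∃ a b : ℝ, ∀ z, G x y z = a + b * z)
    (s1 : ∀ x y z, G x y z = G y x z)
    (s2 : ∀ x y z, G x y z = G x z y) :
    ∀ x y z, G x y z = G 0 0 0
      + (G 1 0 0 - G 0 0 0) * (x + y + z)
      + (G 1 1 0 - 2 * G 1 0 0 + G 0 0 0) * (x * y + y * z + z * x)
      + (G 1 1 1 - 3 * G 1 1 0 + 3 * G 1 0 0 - G 0 0 0) * (x * y * z) := by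
  have hx : ∀ y z x, G x y z = G 0 y z + (G 1 y z - G 0 y z) * x :=
    fun y z => affine_eval (ha y z)
  have hy : ∀ x z y, G x y z = G x 0 z + (G x 1 z - G x 0 z) * y :=
    fun x z => affine_eval (hb x z)
  have hz : ∀ x y z, G x y z = G x y 0 + (G x y 1 - G x y 0) * z :=
    fun x y => affine_eval (hc x y)
  intro x y z
  linear_combination hx y z x + (1-x) * hy 0 z y + x * hy 1 z y
    + (1-x)*(1-y) * hz 0 0 z + (1-x)*y * hz 0 1 z + x*(1-y) * hz 1 0 z + x*y * hz 1 1 z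
    + ((1-x)*y*(1-z) + (1-x)*(1-y)*z) * s1 0 1 0
    + (1-x)*(1-y)*z * s2 0 0 1
    + (1-x)*y*z * s1 0 1 1
    + (x*(1-y)*z + (1-x)*y*z) * s2 1 0 1

lemma exists_e3_move (x y z d : ℝ) (hx : x ∈ Set.Ioo (0:ℝ) 1) (hy : y ∈ Set.Ioo (0:ℝ) 1)
    (hz : z ∈ Set.Ioo (0:ℝ) 1) (hxy : x ≠ y) (hxz : x ≠ z) (hyz : y ≠ z) (hd : d ≠ 0) :
    ∃ x' y' z' : ℝ, x' ∈ Set.Icc (0:ℝ) 1 ∧ y' ∈ Set.Icc (0:ℝ) 1 ∧ z' ∈ Set.Icc (0:ℝ) 1 ∧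
      x' + y' + z' = x + y + z ∧ x' * y' + y' * z' + z' * x' = x * y + y * z + z * x ∧
      d * (x' * y' * z') > d * (x * y * z) := by
  classical
  set S : ℝ → ℝ := fun t => y + z - t with hS
  set Pi : ℝ → ℝ := fun t => (x*y + y*z + z*x) - (x + t) * S t with hPi
  set ds : ℝ → ℝ := fun t => S t ^ 2 - 4 * Pi t with hds
  set Y : ℝ → ℝ := fun t => (S t + Real.sqrt (ds t)) / 2 with hY
  set Z : ℝ → ℝ := fun t => (S t - Real.sqrt (ds t)) / 2 with hZ
  set H : ℝ → ℝ := fun t => (x - y) * (x - z) + t * (2*x - y - z) + t^2 with hH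
  have hds0 : ds 0 = (y - z)^2 := by simp only [hds, hPi, hS]; ring
  have hds0pos : 0 < ds 0 := by
    rw [hds0]; have := sub_ne_zero.2 hyz; positivity
  have hScont : Continuous S := by fun_prop
  have hPicont : Continuous Pi := by fun_prop
  have hdscont : Continuous ds := by fun_prop
  have hYcont : Continuous Y := by
    exact (hScont.add (hdscont.sqrt)).div_const 2
  have hZcont : Continuous Z := by
    exact (hScont.sub (hdscont.sqrt)).div_const 2
  have hHcont : Continuous H := by fun_prop
  have hY0 : Y 0 = max y z := by
    simp only [hY, hds0, Real.sqrt_sq_eq_abs, hS]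
    rcases le_total y z with h | h
    · rw [abs_of_nonpos (by linarith), max_eq_right h]; ring
    · rw [abs_of_nonneg (by linarith), max_eq_left h]; ring
  have hZ0 : Z 0 = min y z := by
    simp only [hZ, hds0, Real.sqrt_sq_eq_abs, hS]
    rcases le_total y z with h | h
    · rw [abs_of_nonpos (by linarith), min_eq_left h]; ring
    · rw [abs_of_nonneg (by linarith), min_eq_right h]; ring
  have hY0mem : Y 0 ∈ Set.Ioo (0:ℝ) 1 := by
    rw [hY0]; rcases max_cases y z with ⟨h, _⟩ | ⟨h, _⟩ <;> rw [h] <;> assumption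
  have hZ0mem : Z 0 ∈ Set.Ioo (0:ℝ) 1 := by
    rw [hZ0]; rcases min_cases y z with ⟨h, _⟩ | ⟨h, _⟩ <;> rw [h] <;> assumption
  have hH0 : H 0 = (x - y) * (x - z) := by simp [hH]
  have hH0ne : d * H 0 ≠ 0 := by
    rw [hH0]
    exact mul_ne_zero hd (mul_ne_zero (sub_ne_zero.2 hxy) (sub_ne_zero.2 hxz))
  -- eventually facts
  have ev1 : ∀ᶠ t in nhds (0:ℝ), x + t ∈ Set.Ioo (0:ℝ) 1 := by
    have : ContinuousAt (fun t : ℝ => x + t) 0 := by fun_prop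
    exact this.eventually_mem (isOpen_Ioo.mem_nhds (by simpa using hx))
  have ev2 : ∀ᶠ t in nhds (0:ℝ), Y t ∈ Set.Ioo (0:ℝ) 1 :=
    hYcont.continuousAt.eventually_mem (isOpen_Ioo.mem_nhds hY0mem)
  have ev3 : ∀ᶠ t in nhds (0:ℝ), Z t ∈ Set.Ioo (0:ℝ) 1 :=
    hZcont.continuousAt.eventually_mem (isOpen_Ioo.mem_nhds hZ0mem)
  have ev4 : ∀ᶠ t in nhds (0:ℝ), 0 < ds t :=
    hdscont.continuousAt.eventually_mem (isOpen_Ioi.mem_nhds hds0pos)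
  have ev5 : ∀ᶠ t in nhds (0:ℝ), 0 < (d * H t) * (d * H 0) := by
    have hc : ContinuousAt (fun t => (d * H t) * (d * H 0)) 0 := by fun_prop
    have hpos : (0:ℝ) < (d * H 0) * (d * H 0) := by
      rcases (mul_self_pos).2 hH0ne with h; exact h
    exact hc.eventually_mem (isOpen_Ioi.mem_nhds hpos)
  obtain ⟨δ, hδpos, hball⟩ := Metric.eventually_nhds_iff.mp
    ((((ev1.and ev2).and ev3).and ev4).and ev5)
  set t0 : ℝ := if 0 < d * H 0 then δ/2 else -(δ/2) with ht0
  have ht0dist : dist t0 0 < δ := by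
    rw [Real.dist_eq, sub_zero, ht0]
    split_ifs
    · rw [abs_of_pos (by linarith)]; linarith
    · rw [abs_neg, abs_of_pos (by linarith)]; linarith
  have hprops := hball ht0dist
  obtain ⟨⟨⟨⟨hm1, hm2⟩, hm3⟩, hm4⟩, hm5⟩ := hprops
  have ht0sign : 0 < t0 * (d * H 0) := by
    rw [ht0]; split_ifs with h
    · positivity
    · have hneg : d * H 0 < 0 := lt_of_le_of_ne (not_lt.1 h) hH0ne
      have hp : (0:ℝ) < δ/2 := by linarith
      nlinarith [mul_pos hp (neg_pos.2 hneg)]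
  have hsum : Y t0 + Z t0 = S t0 := by rw [hY, hZ]; ring
  have hprod : Y t0 * Z t0 = Pi t0 := by
    have h1 : Y t0 * Z t0 = (S t0 ^ 2 - Real.sqrt (ds t0) ^ 2) / 4 := by rw [hY, hZ]; ring
    rw [h1, Real.sq_sqrt (le_of_lt hm4), hds]; ring
  have hSval : S t0 = y + z - t0 := by rw [hS]
  have hPival : Pi t0 = (x*y + y*z + z*x) - (x + t0) * (y + z - t0) := by
    rw [hPi, hS]
  refine ⟨x + t0, Y t0, Z t0, Set.Ioo_subset_Icc_self hm1, Set.Ioo_subset_Icc_self hm2,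
    Set.Ioo_subset_Icc_self hm3, ?_, ?_, ?_⟩
  · have := hsum; rw [hSval] at this; linarith
  · have h2 : (x + t0) * Y t0 + Y t0 * Z t0 + Z t0 * (x + t0)
        = (x + t0) * (Y t0 + Z t0) + Y t0 * Z t0 := by ring
    rw [h2, hsum, hprod, hSval, hPival]; ring
  · have he3 : (x + t0) * (Y t0 * Z t0) - x * y * z = t0 * H t0 := by
      rw [hprod, hPival, hH]; ring
    have key : 0 < t0 * (d * H t0) := by
      have hB2 : 0 < (d * H 0) * (d * H 0) := (mul_self_pos).2 hH0ne
      nlinarith [mul_pos ht0sign hm5]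
    have heq : d * ((x + t0) * Y t0 * Z t0) - d * (x * y * z) = t0 * (d * H t0) := by
      linear_combination d * he3
    linarith [key, heq]

lemma comp_upd3 (n : ℕ) (g : ℝ → ℝ) (q : Fin n → ℝ) (u v w : Fin n) (x y z : ℝ) :
    (fun j => g (Function.update (Function.update (Function.update q u x) v y) w z j))
      = Function.update (Function.update (Function.update (g ∘ q) u (g x)) v (g y)) w (g z) := by
  funext j
  simp only [Function.update_apply, Function.comp_apply]
  split_ifs <;> rfl

lemma sum_upd3 (n : ℕ) (g : ℝ → ℝ) (q : Fin n → ℝ) (u v w : Fin n)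
    (huv : u ≠ v) (huw : u ≠ w) (hvw : v ≠ w) (x y z : ℝ) :
    ∑ j, g (Function.update (Function.update (Function.update q u x) v y) w z j)
      = g x + g y + g z + ∑ j ∈ ((Finset.univ \ {w}) \ {v}) \ {u}, g (q j) := by
  rw [show (∑ j, g (Function.update (Function.update (Function.update q u x) v y) w z j))
    = ∑ j, (Function.update (Function.update (Function.update (g ∘ q) u (g x)) v (g y)) w (g z)) j
    from by rw [← comp_upd3]]
  rw [Finset.sum_update_of_mem (Finset.mem_univ w)]
  rw [Finset.sum_update_of_mem (by simp [hvw] : v ∈ Finset.univ \ {w})]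
  rw [Finset.sum_update_of_mem (by simp [huv, huw] : u ∈ (Finset.univ \ {w}) \ {v})]
  simp only [Function.comp_apply]
  ring

lemma upd3_swap_uv (n : ℕ) (q : Fin n → ℝ) (u v w : Fin n)
    (huv : u ≠ v) (huw : u ≠ w) (hvw : v ≠ w) (x y z : ℝ) :
    (Function.update (Function.update (Function.update q u y) v x) w z) ∘ (Equiv.swap u v)
      = Function.update (Function.update (Function.update q u x) v y) w z := by
  funext j
  simp only [Function.comp_apply, Function.update_apply, Equiv.swap_apply_def]
  split_ifs <;> simp_all

lemma upd3_swap_vw (n : ℕ) (q : Fin n → ℝ) (u v w : Fin n)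
    (huv : u ≠ v) (huw : u ≠ w) (hvw : v ≠ w) (x y z : ℝ) :
    (Function.update (Function.update (Function.update q u x) v z) w y) ∘ (Equiv.swap v w)
      = Function.update (Function.update (Function.update q u x) v y) w z := by
  funext j
  simp only [Function.comp_apply, Function.update_apply, Equiv.swap_apply_def]
  split_ifs <;> simp_all

theorem reduction_to_two_values (n : ℕ) (i : ℕ) (p : Fin n → ℝ)
    (hp : ∀ j, p j ∈ Set.Icc (0 : ℝ) 1) :
    R n i p ≤ sSup {r : ℝ | ∃ q : Fin n → ℝ, (∀ j, q j ∈ Set.Icc (0 : ℝ) 1) ∧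
      (Set.range q ∩ Set.Ioo 0 1).ncard ≤ 2 ∧ r = R n i q} := by
  classical
  set Sset := {r : ℝ | ∃ q : Fin n → ℝ, (∀ j, q j ∈ Set.Icc (0 : ℝ) 1) ∧
      (Set.range q ∩ Set.Ioo 0 1).ncard ≤ 2 ∧ r = R n i q} with hSset
  -- Pprob nonneg / bounded on the cube
  have hPnonneg : ∀ q : Fin n → ℝ, (∀ j, q j ∈ Set.Icc (0:ℝ) 1) → 0 ≤ Pprob n i q := by
    intro q hq
    apply Finset.sum_nonneg
    intro A _
    apply mul_nonneg
    · exact Finset.prod_nonneg fun j _ => (hq j).1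
    · exact Finset.prod_nonneg fun j _ => by have := (hq j).2; linarith
  have hPle : ∀ q : Fin n → ℝ, (∀ j, q j ∈ Set.Icc (0:ℝ) 1) →
      Pprob n i q ≤ ((Finset.univ.filter (fun A : Finset (Fin n) => A.card = i)).card : ℝ) := by
    intro q hq
    calc Pprob n i q ≤ ∑ _A ∈ Finset.univ.filter (fun A : Finset (Fin n) => A.card = i), (1:ℝ) := by
          apply Finset.sum_le_sum
          intro A _
          have h1 : ∏ j ∈ A, q j ≤ 1 :=
            Finset.prod_le_one (fun j _ => (hq j).1) (fun j _ => (hq j).2)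
          have h2 : ∏ j ∈ Aᶜ, (1 - q j) ≤ 1 :=
            Finset.prod_le_one (fun j _ => by have := (hq j).2; linarith)
              (fun j _ => by have := (hq j).1; linarith)
          have h1' : 0 ≤ ∏ j ∈ A, q j := Finset.prod_nonneg fun j _ => (hq j).1
          have h2' : 0 ≤ ∏ j ∈ Aᶜ, (1 - q j) :=
            Finset.prod_nonneg fun j _ => by have := (hq j).2; linarith
          nlinarith
      _ = ((Finset.univ.filter (fun A : Finset (Fin n) => A.card = i)).card : ℝ) := by
          simp
  have hRbound : ∀ q : Fin n → ℝ, (∀ j, q j ∈ Set.Icc (0:ℝ) 1) →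
      R n i q ≤ Real.sqrt n * ((Finset.univ.filter (fun A : Finset (Fin n) => A.card = i)).card : ℝ) := by
    intro q hq
    unfold R
    have h1 : Real.sqrt (∑ j, q j * (1 - q j)) ≤ Real.sqrt n := by
      apply Real.sqrt_le_sqrt
      calc (∑ j, q j * (1 - q j)) ≤ ∑ _j : Fin n, (1:ℝ) := by
            apply Finset.sum_le_sum
            intro j _
            have h1 := (hq j).1; have h2 := (hq j).2; nlinarith
        _ = n := by simp
    exact mul_le_mul h1 (hPle q hq) (hPnonneg q hq) (Real.sqrt_nonneg _)
  have hbdd : BddAbove Sset := by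
    refine ⟨Real.sqrt n * ((Finset.univ.filter (fun A : Finset (Fin n) => A.card = i)).card : ℝ), ?_⟩
    rintro r ⟨q, hq, -, rfl⟩
    exact hRbound q hq
  -- the compact constraint set
  set c := ∑ j, p j * (1 - p j) with hc
  have hfcont : Continuous (fun q : Fin n → ℝ => ∑ j, q j * (1 - q j)) :=
    continuous_finset_sum _ (fun j _ => (continuous_apply j).mul
      (continuous_const.sub (continuous_apply j)))
  set K := {q : Fin n → ℝ | ∀ j, q j ∈ Set.Icc (0:ℝ) 1} ∩
      {q : Fin n → ℝ | ∑ j, q j * (1 - q j) = c} with hK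
  have hKcube : IsCompact {q : Fin n → ℝ | ∀ j, q j ∈ Set.Icc (0:ℝ) 1} := by
    have h := isCompact_univ_pi (fun _ : Fin n => isCompact_Icc (a := (0:ℝ)) (b := 1))
    convert h using 1
    ext q
    simp only [Set.mem_setOf_eq, Set.mem_univ_pi, Set.mem_Icc, Pi.le_def]
  have hKc : IsCompact K := hKcube.inter_right (isClosed_eq hfcont continuous_const)
  have hpK : p ∈ K := ⟨hp, rfl⟩
  obtain ⟨q1, hq1K, hq1max⟩ := hKc.exists_isMaxOn ⟨p, hpK⟩ (pprob_continuous n i).continuousOn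
  set M := K ∩ {q : Fin n → ℝ | Pprob n i q = Pprob n i q1} with hM
  have hMc : IsCompact M := hKc.inter_right (isClosed_eq (pprob_continuous n i) continuous_const)
  have hΦcont : Continuous (fun q : Fin n → ℝ => ∑ j, (q j)^3) :=
    continuous_finset_sum _ (fun j _ => (continuous_apply j).pow 3)
  obtain ⟨qs, hqsM, hqsmax⟩ := hMc.exists_isMaxOn ⟨q1, hq1K, rfl⟩ hΦcont.continuousOn
  have hqsK : qs ∈ K := hqsM.1
  have hqsP : Pprob n i qs = Pprob n i q1 := hqsM.2
  -- the key claim: qs has at most two interior values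
  have hclaim : (Set.range qs ∩ Set.Ioo 0 1).ncard ≤ 2 := by
    by_contra hn
    have hfin : (Set.range qs ∩ Set.Ioo 0 1).Finite := (Set.finite_range qs).inter_of_left _
    have h3 : 2 < (Set.range qs ∩ Set.Ioo 0 1).ncard := not_le.1 hn
    obtain ⟨a, ha, b, hb, cc, hcc, hab, hac, hbc⟩ := (Set.two_lt_ncard hfin).1 h3
    obtain ⟨u, hu⟩ := ha.1
    obtain ⟨v, hv⟩ := hb.1
    obtain ⟨w, hw⟩ := hcc.1
    have hxI : qs u ∈ Set.Ioo (0:ℝ) 1 := hu ▸ ha.2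
    have hyI : qs v ∈ Set.Ioo (0:ℝ) 1 := hv ▸ hb.2
    have hzI : qs w ∈ Set.Ioo (0:ℝ) 1 := hw ▸ hcc.2
    have hxy : qs u ≠ qs v := by rw [hu, hv]; exact hab
    have hxz : qs u ≠ qs w := by rw [hu, hw]; exact hac
    have hyz : qs v ≠ qs w := by rw [hv, hw]; exact hbc
    have huv : u ≠ v := fun h => hxy (h ▸ rfl)
    have huw : u ≠ w := fun h => hxz (h ▸ rfl)
    have hvw : v ≠ w := fun h => hyz (h ▸ rfl)
    set G : ℝ → ℝ → ℝ → ℝ := fun x y z =>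
      Pprob n i (Function.update (Function.update (Function.update qs u x) v y) w z) with hG
    have ha' : ∀ y z, ∃ a b : ℝ, ∀ x, G x y z = a + b * x := by
      intro y z
      have hrw : ∀ x, Function.update (Function.update (Function.update qs u x) v y) w z
          = Function.update (Function.update (Function.update qs v y) w z) u x := by
        intro x
        rw [Function.update_comm huv, Function.update_comm huw]
      obtain ⟨a, b, hab'⟩ := pprob_affine n i (Function.update (Function.update qs v y) w z) u
      exact ⟨a, b, fun x => by rw [hG]; simp only; rw [hrw x]; exact hab' x⟩
    have hb' : ∀ x z, ∃ a b : ℝ, ∀ y, G x y z = a + b * y := by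
      intro x z
      have hrw : ∀ y, Function.update (Function.update (Function.update qs u x) v y) w z
          = Function.update (Function.update (Function.update qs u x) w z) v y := by
        intro y
        rw [Function.update_comm hvw]
      obtain ⟨a, b, hab'⟩ := pprob_affine n i (Function.update (Function.update qs u x) w z) v
      exact ⟨a, b, fun y => by rw [hG]; simp only; rw [hrw y]; exact hab' y⟩
    have hc' : ∀ x y, ∃ a b : ℝ, ∀ z, G x y z = a + b * z :=
      fun x y => pprob_affine n i (Function.update (Function.update qs u x) v y) w
    have s1 : ∀ x y z, G x y z = G y x z := by
      intro x y z
      rw [hG]; simp only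
      rw [← upd3_swap_uv n qs u v w huv huw hvw x y z, pprob_comp_perm]
    have s2 : ∀ x y z, G x y z = G x z y := by
      intro x y z
      rw [hG]; simp only
      rw [← upd3_swap_vw n qs u v w huv huw hvw x y z, pprob_comp_perm]
    have rep := affine_sym_rep G ha' hb' hc' s1 s2
    set B : ℝ := G 1 1 1 - 3 * G 1 1 0 + 3 * G 1 0 0 - G 0 0 0 with hB
    set d : ℝ := if B = 0 then 1 else B with hd
    have hdne : d ≠ 0 := by
      rw [hd]; split_ifs with h
      · norm_num
      · exact h
    obtain ⟨x', y', z', hx'I, hy'I, hz'I, he1, he2, he3⟩ :=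
      exists_e3_move (qs u) (qs v) (qs w) d hxI hyI hzI hxy hxz hyz hdne
    set q' : Fin n → ℝ :=
      Function.update (Function.update (Function.update qs u x') v y') w z' with hq'
    have hqs_eq : Function.update (Function.update (Function.update qs u (qs u)) v (qs v)) w (qs w)
        = qs := by
      rw [Function.update_eq_self, Function.update_eq_self, Function.update_eq_self]
    -- coordinates of q' in the cube
    have hq'cube : ∀ j, q' j ∈ Set.Icc (0:ℝ) 1 := by
      intro j
      rw [hq']
      simp only [Function.update_apply]
      split_ifs
      · exact hz'I
      · exact hy'I
      · exact hx'I
      · exact hqsK.1 j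
    -- sigma is preserved
    have hsum1 := sum_upd3 n (fun t => t * (1 - t)) qs u v w huv huw hvw x' y' z'
    have hsum2 := sum_upd3 n (fun t => t * (1 - t)) qs u v w huv huw hvw (qs u) (qs v) (qs w)
    rw [hqs_eq] at hsum2
    have hgsum : x' * (1 - x') + y' * (1 - y') + z' * (1 - z')
        = qs u * (1 - qs u) + qs v * (1 - qs v) + qs w * (1 - qs w) := by
      linear_combination (1 - (x' + y' + z') - (qs u + qs v + qs w)) * he1 + 2 * he2
    have hq'σ : ∑ j, q' j * (1 - q' j) = c := by
      rw [hq', hsum1]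
      have : ∑ j, qs j * (1 - qs j) = c := hqsK.2
      rw [hsum2] at this
      linarith [hgsum]
    have hq'K : q' ∈ K := ⟨hq'cube, hq'σ⟩
    -- Pprob change
    have hGqs : G (qs u) (qs v) (qs w) = Pprob n i qs := by
      rw [hG]; simp only; rw [hqs_eq]
    have hGq' : G x' y' z' = Pprob n i q' := by rw [hG, hq']
    have hPq' : Pprob n i q' = Pprob n i qs + B * (x' * y' * z' - qs u * qs v * qs w) := by
      have r1 := rep x' y' z'
      have r2 := rep (qs u) (qs v) (qs w)
      rw [hGq'] at r1
      rw [hGqs] at r2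
      linear_combination r1 - r2 + (G 1 0 0 - G 0 0 0) * he1
        + (G 1 1 0 - 2 * G 1 0 0 + G 0 0 0) * he2
    -- now split on B
    rcases eq_or_ne B 0 with hB0 | hB0
    · -- B = 0 : Pprob unchanged, Φ increases
      have hd1 : d = 1 := by rw [hd, if_pos hB0]
      have he3' : x' * y' * z' > qs u * qs v * qs w := by
        rw [hd1] at he3; linarith
      have hPeq : Pprob n i q' = Pprob n i qs := by rw [hPq', hB0]; ring
      have hq'M : q' ∈ M := ⟨hq'K, by simp only [Set.mem_setOf_eq]; rw [hPeq, hqsP]⟩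
      have hΦle : ∑ j, (q' j)^3 ≤ ∑ j, (qs j)^3 := hqsmax hq'M
      have hcube1 := sum_upd3 n (fun t => t^3) qs u v w huv huw hvw x' y' z'
      have hcube2 := sum_upd3 n (fun t => t^3) qs u v w huv huw hvw (qs u) (qs v) (qs w)
      rw [hqs_eq] at hcube2
      have hΦdiff : x'^3 + y'^3 + z'^3 - ((qs u)^3 + (qs v)^3 + (qs w)^3)
          = 3 * (x' * y' * z' - qs u * qs v * qs w) := by
        linear_combination ((x' + y' + z')^2 + (x' + y' + z') * (qs u + qs v + qs w)
          + (qs u + qs v + qs w)^2 - 3 * (qs u * qs v + qs v * qs w + qs w * qs u)) * he1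
          - 3 * (x' + y' + z') * he2
      rw [hq', hcube1, hcube2] at hΦle
      nlinarith [hΦle, hΦdiff, he3']
    · -- B ≠ 0 : Pprob strictly increases, contradicting maximality
      have hdB : d = B := by rw [hd, if_neg hB0]
      rw [hdB] at he3
      have : Pprob n i q' > Pprob n i qs := by
        rw [hPq']
        nlinarith [he3]
      have hle : Pprob n i q' ≤ Pprob n i q1 := hq1max hq'K
      rw [← hqsP] at hle
      linarith
  -- conclude
  have hmem : R n i qs ∈ Sset := ⟨qs, hqsK.1, hclaim, rfl⟩
  have hRle : R n i p ≤ R n i qs := by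
    unfold R
    rw [hqsK.2, ← hc]
    have hPp : Pprob n i p ≤ Pprob n i qs := by
      rw [hqsP]; exact hq1max hpK
    exact mul_le_mul_of_nonneg_left hPp (Real.sqrt_nonneg _)
  exact le_trans hRle (le_csSup hbdd hmem)
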